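/- arXiv:alg-geom/9708019 — 2 statements merged into one kernel-verified Lean document; each statement's English description precedes it below -/
import Mathlib

section
/- Suppose A is a connected, simply connected DG commutative algebra (H⁰(A) = ℂ, H¹(A) = 0) whose cohomology H•(A) is k-free on a graded vector space V (i.e., there is a map of graded vector spaces V → H•(A) inducing an algebra morphism S(V) → H•(A) which is an isomorphism in degrees ≤ k and injective in degree k+1). Then there exists a morphism of DG algebras S(V) → A (with zero differential on S(V)) that induces an isomorphism on cohomology in degrees ≤ k and an injection in degree k+1; hence S(V) is a k-minimal model of A and A is k-formal. -/
/-!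
STATEMENT 1: Let A be a connected, simply connected DG commutative algebra
(H⁰(A) = ℂ, H¹(A) = 0) whose cohomology is k-free on a graded vector space V:
there is a map of graded vector spaces V → H•(A) inducing an algebra morphism
S(V) → H•(A) which is an isomorphism in degrees ≤ k and injective in degree
k + 1.  Then there is a morphism of DG algebras S(V) → A (S(V) with the zero
differential) inducing an isomorphism on cohomology in degrees ≤ k and an
injection in degree k + 1; hence S(V) is a k-minimal model of A and A is
k-formal.

S(V) is represented by a graded algebra (R, 𝒜) free graded-commutative on
generators V concentrated in degrees 2,…,k.  The k-freeness of H•(A) on V is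
expressed at the level of closed representatives: a degree-preserving,
cocycle-valued linear map ψ : R → A which is unital and multiplicative modulo
coboundaries (i.e. an algebra morphism S(V) → H•(A)) and which induces an
isomorphism on cohomology in degrees ≤ k and an injection in degree k + 1.
The conclusion upgrades ψ to a genuine morphism of DG algebras F : S(V) → A
with the same cohomological properties; since S(V) is a minimal algebra
generated in degrees ≤ k, this says exactly that S(V) is a k-minimal model of
A, and (S(V) being also a k-minimal model of H•(A)) that A is k-formal.
-/

noncomputable section

variable {R : Type} [Ring R] [Algebra ℂ R]

/-- `𝒜` is an ℕ-grading of the ℂ-algebra `R`: an internal direct sum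
decomposition compatible with the multiplication. -/
def IsGrading (𝒜 : ℕ → Submodule ℂ R) : Prop :=
  DirectSum.IsInternal 𝒜 ∧ (1 : R) ∈ 𝒜 0 ∧
    ∀ i j : ℕ, ∀ x ∈ 𝒜 i, ∀ y ∈ 𝒜 j, x * y ∈ 𝒜 (i + j)

/-- Graded commutativity: `x y = (-1)^{ij} y x` for homogeneous `x, y` of
degrees `i, j`. -/
def IsGradedComm (𝒜 : ℕ → Submodule ℂ R) : Prop :=
  ∀ i j : ℕ, ∀ x ∈ 𝒜 i, ∀ y ∈ 𝒜 j, x * y = ((-1 : ℂ) ^ (i * j)) • (y * x)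

/-- `d` is a differential on the graded algebra `(R, 𝒜)`: degree `+1`,
square zero, and the graded Leibniz rule. -/
def IsDifferential (𝒜 : ℕ → Submodule ℂ R) (d : R →ₗ[ℂ] R) : Prop :=
  (∀ i : ℕ, ∀ x ∈ 𝒜 i, d x ∈ 𝒜 (i + 1)) ∧ (∀ x : R, d (d x) = 0) ∧
    ∀ i : ℕ, ∀ x ∈ 𝒜 i, ∀ y : R,
      d (x * y) = d x * y + ((-1 : ℂ) ^ i) • (x * d y)

/-- `(R, 𝒜)` is the free graded-commutative algebra `S(V)` on the graded
subspace of generators `V`: it is graded, graded-commutative, and satisfies the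
universal property that every degree-preserving linear map from `V` to a
graded-commutative graded algebra extends uniquely to a degree-preserving
algebra morphism. -/
def IsFreeGradedCommOn (𝒜 V : ℕ → Submodule ℂ R) : Prop :=
  IsGrading 𝒜 ∧ IsGradedComm 𝒜 ∧ (∀ i, V i ≤ 𝒜 i) ∧
    ∀ (R' : Type) [Ring R'] [Algebra ℂ R'] (𝒜' : ℕ → Submodule ℂ R'),
      IsGrading 𝒜' → IsGradedComm 𝒜' →
      ∀ φ : ∀ i : ℕ, (V i) →ₗ[ℂ] R', (∀ (i : ℕ) (v : V i), φ i v ∈ 𝒜' i) →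
      ∃! F : R →ₐ[ℂ] R',
        (∀ i : ℕ, ∀ x ∈ 𝒜 i, F x ∈ 𝒜' i) ∧ ∀ (i : ℕ) (v : V i), F v = φ i v

/-- The augmentation ideal `M⁺ = ⊕_{i>0} Mⁱ` of a graded algebra. -/
def PositivePart (𝒜 : ℕ → Submodule ℂ R) : Submodule ℂ R :=
  ⨆ i : ℕ, ⨆ _ : 0 < i, 𝒜 i

/-- A DG algebra `(R, 𝒜, d)` is minimal: free as a graded-commutative algebra,
`M¹ = 0`, and `d(M) ⊆ M⁺ · M⁺`. -/
def IsMinimal (𝒜 : ℕ → Submodule ℂ R) (d : R →ₗ[ℂ] R) : Prop :=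
  (∃ V : ℕ → Submodule ℂ R, IsFreeGradedCommOn 𝒜 V) ∧ 𝒜 1 = ⊥ ∧
    ∀ x : R, d x ∈ Submodule.span ℂ
      {z : R | ∃ a ∈ PositivePart 𝒜, ∃ b ∈ PositivePart 𝒜, z = a * b}

/-- Connectedness: `H⁰(A) = ℂ`, i.e. the closed elements of degree 0 are the
multiples of 1. -/
def IsConnectedDG (𝒜 : ℕ → Submodule ℂ R) (d : R →ₗ[ℂ] R) : Prop :=
  LinearMap.ker d ⊓ 𝒜 0 = Submodule.span ℂ {(1 : R)}

/-- Simple connectedness: `H¹(A) = 0`, i.e. every closed element of degree 1 is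
exact. -/
def IsSimplyConnectedDG (𝒜 : ℕ → Submodule ℂ R) (d : R →ₗ[ℂ] R) : Prop :=
  ∀ x ∈ 𝒜 1, d x = 0 → ∃ y : R, d y = x

/-- A map `F` between DG algebras induces an injection on degree-`i`
cohomology. -/
def InducesCohomInjAt (𝒜 : ℕ → Submodule ℂ R) (d : R →ₗ[ℂ] R)
    {R' : Type} [Ring R'] [Algebra ℂ R'] (𝒜' : ℕ → Submodule ℂ R')
    (d' : R' →ₗ[ℂ] R') (F : R → R') (i : ℕ) : Prop :=
  ∀ x ∈ 𝒜 i, d x = 0 → (∃ y' : R', d' y' = F x) → ∃ y : R, d y = x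

/-- A map `F` between DG algebras induces a surjection on degree-`i`
cohomology. -/
def InducesCohomSurjAt (𝒜 : ℕ → Submodule ℂ R) (d : R →ₗ[ℂ] R)
    {R' : Type} [Ring R'] [Algebra ℂ R'] (𝒜' : ℕ → Submodule ℂ R')
    (d' : R' →ₗ[ℂ] R') (F : R → R') (i : ℕ) : Prop :=
  ∀ x' ∈ 𝒜' i, d' x' = 0 → ∃ x ∈ 𝒜 i, d x = 0 ∧ ∃ y' : R', d' y' = x' - F x

/-- A map `F` between DG algebras induces an isomorphism on degree-`i`
cohomology. -/
def InducesCohomIsoAt (𝒜 : ℕ → Submodule ℂ R) (d : R →ₗ[ℂ] R)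
    {R' : Type} [Ring R'] [Algebra ℂ R'] (𝒜' : ℕ → Submodule ℂ R')
    (d' : R' →ₗ[ℂ] R') (F : R → R') (i : ℕ) : Prop :=
  InducesCohomInjAt 𝒜 d 𝒜' d' F i ∧ InducesCohomSurjAt 𝒜 d 𝒜' d' F i


/-- If the cohomology of a connected simply connected DG algebra `A` is
`k`-free on `V`, then `S(V)` is a `k`-minimal model of `A`, and `A` is
`k`-formal. -/
theorem kFree_cohomology_implies_kFormal
    {R : Type} [Ring R] [Algebra ℂ R] (𝒜 V : ℕ → Submodule ℂ R)
    (k : ℕ) (hV : ∀ i : ℕ, i < 2 ∨ k < i → V i = ⊥)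
    (hfree : IsFreeGradedCommOn 𝒜 V)
    {R' : Type} [Ring R'] [Algebra ℂ R'] (𝒜' : ℕ → Submodule ℂ R')
    (d' : R' →ₗ[ℂ] R')
    (hgr' : IsGrading 𝒜') (hgc' : IsGradedComm 𝒜') (hd' : IsDifferential 𝒜' d')
    (hconn : IsConnectedDG 𝒜' d') (hsimp : IsSimplyConnectedDG 𝒜' d')
    -- k-freeness of H•(A) on V, at the level of closed representatives
    (hkfree : ∃ ψ : R →ₗ[ℂ] R',
      (∀ i : ℕ, ∀ x ∈ 𝒜 i, ψ x ∈ 𝒜' i) ∧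
      (∀ x : R, d' (ψ x) = 0) ∧
      (ψ 1 - 1 ∈ LinearMap.range d') ∧
      (∀ x y : R, ψ (x * y) - ψ x * ψ y ∈ LinearMap.range d') ∧
      (∀ i ≤ k, InducesCohomIsoAt 𝒜 (0 : R →ₗ[ℂ] R) 𝒜' d' ψ i) ∧
      InducesCohomInjAt 𝒜 (0 : R →ₗ[ℂ] R) 𝒜' d' ψ (k + 1)) :
    -- S(V) is minimal and generated in degrees ≤ k …
    IsMinimal 𝒜 (0 : R →ₗ[ℂ] R) ∧
    (Algebra.adjoin ℂ {x : R | ∃ i ≤ k, x ∈ 𝒜 i} = ⊤) ∧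
    -- … and there is a genuine DG algebra morphism S(V) → A which is an
    -- isomorphism on cohomology in degrees ≤ k and injective in degree k+1,
    -- i.e. S(V) is a k-minimal model of A and A is k-formal
    ∃ F : R →ₐ[ℂ] R',
      (∀ i : ℕ, ∀ x ∈ 𝒜 i, F x ∈ 𝒜' i) ∧
      (∀ x : R, d' (F x) = 0) ∧
      (∀ i ≤ k, InducesCohomIsoAt 𝒜 (0 : R →ₗ[ℂ] R) 𝒜' d' F i) ∧
      InducesCohomInjAt 𝒜 (0 : R →ₗ[ℂ] R) 𝒜' d' F (k + 1) := by
  classical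
  obtain ⟨ψ, hψgr, hψd, hψ1, hψmul, hψiso, hψinj⟩ := hkfree
  obtain ⟨hgr, hgc, hVA, huniv⟩ := id hfree
  obtain ⟨hint, h1mem, hmulA⟩ := id hgr
  set gens : Set R := ⋃ i, (V i : Set R) with hgens_def
  -- every element of the multiplicative closure of the generators is
  -- homogeneous of some degree ≠ 1
  have hclos : ∀ m ∈ Submonoid.closure gens, ∃ i, i ≠ 1 ∧ m ∈ 𝒜 i := by
    intro m hm
    induction hm using Submonoid.closure_induction with
    | mem v hv =>
      obtain ⟨i, hvi⟩ := Set.mem_iUnion.mp hv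
      by_cases hi : i < 2 ∨ k < i
      · have hb := hV i hi
        rw [hb] at hvi
        have : v = 0 := hvi
        exact ⟨0, by omega, by rw [this]; exact (𝒜 0).zero_mem⟩
      · push_neg at hi
        exact ⟨i, by omega, hVA i hvi⟩
    | one => exact ⟨0, by omega, h1mem⟩
    | mul x y hx hy ihx ihy =>
      obtain ⟨i, hi, hxi⟩ := ihx
      obtain ⟨j, hj, hyj⟩ := ihy
      exact ⟨i + j, by omega, hmulA i j x hxi y hyj⟩
  -- the subalgebra generated by the generators
  set S : Subalgebra ℂ R := Algebra.adjoin ℂ gens with hS_def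
  have hgensS : gens ⊆ (S : Set R) := Algebra.subset_adjoin
  have hclosS : ∀ m ∈ Submonoid.closure gens, m ∈ S := by
    intro m hm
    have : m ∈ Submodule.span ℂ ((Submonoid.closure gens : Submonoid R) : Set R) :=
      Submodule.subset_span hm
    rw [← Algebra.adjoin_eq_span] at this
    exact this
  -- the grading on S by comap
  set ℬ : ℕ → Submodule ℂ S := fun i => (𝒜 i).comap S.val.toLinearMap with hℬ_def
  have hℬmem : ∀ (i : ℕ) (x : S), x ∈ ℬ i ↔ (x : R) ∈ 𝒜 i := fun i x => Iff.rfl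
  have hS_span : ∀ x : R, x ∈ S →
      x ∈ Submodule.span ℂ ((Submonoid.closure gens : Submonoid R) : Set R) := by
    intro x hx
    rw [← Algebra.adjoin_eq_span]
    exact hx
  have hℬiSup : ∀ x : S, x ∈ ⨆ i, ℬ i := by
    intro s
    have hmap : Submodule.span ℂ ((Submonoid.closure gens : Submonoid R) : Set R) ≤
        Submodule.map S.val.toLinearMap (⨆ i, ℬ i) := by
      rw [Submodule.span_le]
      intro m hm
      obtain ⟨i, _, hmi⟩ := hclos m hm
      refine ⟨⟨m, hclosS m hm⟩, ?_, rfl⟩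
      exact Submodule.mem_iSup_of_mem i hmi
    obtain ⟨t, ht, hts⟩ := hmap (hS_span (s : R) s.2)
    have : t = s := Subtype.ext hts
    rwa [this] at ht
  have hgrS : IsGrading ℬ := by
    refine ⟨?_, ?_, ?_⟩
    · apply DirectSum.isInternal_submodule_of_iSupIndep_of_iSup_eq_top
      · intro i
        rw [Submodule.disjoint_def]
        intro x hxi hxs
        have hle : (⨆ (j) (_ : j ≠ i), ℬ j) ≤
            Submodule.comap S.val.toLinearMap (⨆ (j) (_ : j ≠ i), 𝒜 j) := by
          refine iSup₂_le fun j hj => ?_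
          exact Submodule.comap_mono (le_iSup₂ (f := fun j (_ : j ≠ i) => 𝒜 j) j hj)
        have hx2 : (x : R) ∈ ⨆ (j) (_ : j ≠ i), 𝒜 j := hle hxs
        have hdisj := (hint.submodule_iSupIndep i)
        have : (x : R) = 0 := Submodule.disjoint_def.mp hdisj _ hxi hx2
        exact Subtype.ext this
      · exact eq_top_iff.mpr fun s _ => hℬiSup s
    · show ((1 : S) : R) ∈ 𝒜 0
      exact h1mem
    · intro i j x hx y hy
      show ((x * y : S) : R) ∈ 𝒜 (i + j)
      exact hmulA i j _ hx _ hy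
  have hgcS : IsGradedComm ℬ := by
    intro i j x hx y hy
    have h := hgc i j (x : R) hx (y : R) hy
    apply Subtype.ext
    push_cast
    simpa using h
  -- the generator inclusion into S
  have hφSmem : ∀ (i : ℕ) (v : V i), (v : R) ∈ S :=
    fun i v => hgensS (Set.mem_iUnion.mpr ⟨i, v.2⟩)
  set φS : ∀ i : ℕ, (V i) →ₗ[ℂ] S := fun i =>
    { toFun := fun v => ⟨(v : R), hφSmem i v⟩
      map_add' := fun a b => Subtype.ext rfl
      map_smul' := fun c a => Subtype.ext rfl } with hφS_def
  obtain ⟨G, ⟨hGgr, hGv⟩, -⟩ := huniv S ℬ hgrS hgcS φS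
    (fun i v => hVA i v.2)
  -- uniqueness against the identity gives that S = ⊤
  obtain ⟨F₀, -, hF₀uniq⟩ := huniv R 𝒜 hgr hgc (fun i => (V i).subtype)
    (fun i v => hVA i v.2)
  have hid : (AlgHom.id ℂ R) = F₀ :=
    hF₀uniq _ ⟨fun i x hx => hx, fun i v => rfl⟩
  have hcomp : (S.val.comp G) = F₀ := by
    refine hF₀uniq _ ⟨?_, ?_⟩
    · intro i x hx
      exact hGgr i x hx
    · intro i v
      show ((G (v : R)) : R) = (v : R)
      rw [hGv i v]
      rfl
  have hStop : S = ⊤ := by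
    rw [eq_top_iff]
    intro x _
    have hx : S.val (G x) = x := by
      have := congrArg (fun f => f x) (hcomp.trans hid.symm)
      simpa using this
    have h2 : ((G x : R)) = x := hx
    exact h2 ▸ (G x).2
  have hSpan : Submodule.span ℂ ((Submonoid.closure gens : Submonoid R) : Set R) = ⊤ := by
    rw [← Algebra.adjoin_eq_span, ← hS_def, hStop]
    rfl
  -- degree one part is zero
  have h1bot : 𝒜 1 = ⊥ := by
    rw [eq_bot_iff]
    intro x hx
    have hx2 : x ∈ ⨆ (j) (_ : j ≠ 1), 𝒜 j := by
      have hW : (⊤ : Submodule ℂ R) ≤ ⨆ (j) (_ : j ≠ 1), 𝒜 j := by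
        rw [← hSpan, Submodule.span_le]
        intro m hm
        obtain ⟨i, hi, hmi⟩ := hclos m hm
        exact Submodule.mem_iSup_of_mem i (Submodule.mem_iSup_of_mem hi hmi)
      exact hW trivial
    have : x = 0 := Submodule.disjoint_def.mp (hint.submodule_iSupIndep 1) x hx hx2
    simp [this]
  -- generated in degrees ≤ k
  have hadj : Algebra.adjoin ℂ {x : R | ∃ i ≤ k, x ∈ 𝒜 i} = ⊤ := by
    have hsub : gens ⊆ {x : R | ∃ i ≤ k, x ∈ 𝒜 i} := by
      intro v hv
      obtain ⟨i, hvi⟩ := Set.mem_iUnion.mp hv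
      by_cases hi : i < 2 ∨ k < i
      · have hb := hV i hi
        rw [hb] at hvi
        have : v = 0 := hvi
        exact ⟨0, Nat.zero_le k, by rw [this]; exact (𝒜 0).zero_mem⟩
      · push_neg at hi
        exact ⟨i, hi.2, hVA i hvi⟩
    rw [eq_top_iff, ← hStop, hS_def]
    exact Algebra.adjoin_mono hsub
  -- the DG algebra morphism F : S(V) → A
  obtain ⟨F, ⟨hFgr, hFv⟩, -⟩ := huniv R' 𝒜' hgr' hgc'
    (fun i => ψ ∘ₗ (V i).subtype) (fun i v => hψgr i (v : R) (hVA i v.2))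
  have hd'one : d' (1 : R') = 0 := by
    have h := hd'.2.2 0 1 hgr'.2.1 1
    simp only [one_mul, mul_one, pow_zero, one_smul] at h
    exact (left_eq_add.mp h)
  -- F lands in closed elements
  have hdF : ∀ x : R, d' (F x) = 0 := by
    have hK : ∀ m ∈ Submonoid.closure gens, (∃ i, m ∈ 𝒜 i) ∧ d' (F m) = 0 := by
      intro m hm
      induction hm using Submonoid.closure_induction with
      | mem v hv =>
        obtain ⟨i, hvi⟩ := Set.mem_iUnion.mp hv
        refine ⟨⟨i, hVA i hvi⟩, ?_⟩
        have hFvv : F v = ψ v := hFv i ⟨v, hvi⟩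
        rw [hFvv]
        exact hψd v
      | one => exact ⟨⟨0, h1mem⟩, by rw [map_one]; exact hd'one⟩
      | mul x y hx hy ihx ihy =>
        obtain ⟨⟨i, hxi⟩, hdx⟩ := ihx
        obtain ⟨⟨j, hyj⟩, hdy⟩ := ihy
        refine ⟨⟨i + j, hmulA i j x hxi y hyj⟩, ?_⟩
        rw [map_mul, hd'.2.2 i (F x) (hFgr i x hxi) (F y), hdx, hdy]
        simp
    intro x
    have hx : x ∈ Submodule.span ℂ ((Submonoid.closure gens : Submonoid R) : Set R) := by
      rw [hSpan]; trivial
    have hker : x ∈ LinearMap.ker (d' ∘ₗ F.toLinearMap) := by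
      refine Submodule.span_le.mpr ?_ hx
      intro m hm
      exact LinearMap.mem_ker.mpr ((hK m hm).2)
    simpa using hker
  -- right Leibniz against a closed homogeneous element
  have hLeibR : ∀ (j : ℕ) (x' : R'), x' ∈ 𝒜' j → d' x' = 0 →
      ∀ z : R', d' (z * x') = d' z * x' := by
    intro j x' hx' hdx' z
    set T : R' →ₗ[ℂ] R' :=
      d' ∘ₗ LinearMap.mulRight ℂ x' - (LinearMap.mulRight ℂ x') ∘ₗ d' with hT_def
    have hle : (⨆ l, 𝒜' l) ≤ LinearMap.ker T := by
      refine iSup_le fun l => fun w hw => LinearMap.mem_ker.mpr ?_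
      simp only [hT_def, LinearMap.sub_apply, LinearMap.coe_comp, Function.comp_apply,
        LinearMap.mulRight_apply]
      rw [hd'.2.2 l w hw x', hdx']
      simp
    have hz : z ∈ LinearMap.ker T := by
      apply hle
      rw [hgr'.1.submodule_iSup_eq_top]
      trivial
    have hz' : T z = 0 := hz
    simp only [hT_def, LinearMap.sub_apply, LinearMap.coe_comp, Function.comp_apply,
      LinearMap.mulRight_apply] at hz'
    exact sub_eq_zero.mp hz'
  -- ψ and F agree up to coboundaries
  have hψF : ∀ x : R, ψ x - F x ∈ LinearMap.range d' := by
    have hK : ∀ m ∈ Submonoid.closure gens,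
        (∃ i, m ∈ 𝒜 i) ∧ ψ m - F m ∈ LinearMap.range d' := by
      intro m hm
      induction hm using Submonoid.closure_induction with
      | mem v hv =>
        obtain ⟨i, hvi⟩ := Set.mem_iUnion.mp hv
        refine ⟨⟨i, hVA i hvi⟩, ?_⟩
        have hFvv : F v = ψ v := hFv i ⟨v, hvi⟩
        rw [hFvv, sub_self]
        exact Submodule.zero_mem _
      | one =>
        refine ⟨⟨0, h1mem⟩, ?_⟩
        rw [map_one F]
        exact hψ1
      | mul x y hx hy ihx ihy =>
        obtain ⟨⟨i, hxi⟩, hrx⟩ := ihx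
        obtain ⟨⟨j, hyj⟩, hry⟩ := ihy
        refine ⟨⟨i + j, hmulA i j x hxi y hyj⟩, ?_⟩
        have key : ψ (x * y) - F (x * y) =
            (ψ (x * y) - ψ x * ψ y) + (ψ x * (ψ y - F y) + (ψ x - F x) * F y) := by
          rw [map_mul F]
          noncomm_ring
        rw [key]
        refine Submodule.add_mem _ (hψmul x y) (Submodule.add_mem _ ?_ ?_)
        · obtain ⟨b, hb⟩ := hry
          rw [← hb]
          refine ⟨((-1 : ℂ) ^ i) • (ψ x * b), ?_⟩
          rw [map_smul, hd'.2.2 i (ψ x) (hψgr i x hxi) b, hψd x]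
          rw [zero_mul, zero_add, smul_smul, ← mul_pow]
          norm_num
        · obtain ⟨a, ha⟩ := hrx
          rw [← ha]
          exact ⟨a * F y, hLeibR j (F y) (hFgr j y hyj) (hdF y) a⟩
    intro x
    have hx : x ∈ Submodule.span ℂ ((Submonoid.closure gens : Submonoid R) : Set R) := by
      rw [hSpan]; trivial
    have hmem : x ∈ Submodule.comap (ψ - F.toLinearMap) (LinearMap.range d') := by
      refine Submodule.span_le.mpr ?_ hx
      intro m hm
      have := (hK m hm).2
      simpa using this
    simpa using hmem
  -- assemble the result
  refine ⟨⟨⟨V, hfree⟩, h1bot, ?_⟩, hadj, F, hFgr, hdF, ?_, ?_⟩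
  · intro x
    simp only [LinearMap.zero_apply]
    exact Submodule.zero_mem _
  · intro i hi
    obtain ⟨hinj, hsurj⟩ := hψiso i hi
    constructor
    · intro x hx hdx hex
      obtain ⟨y', hy'⟩ := hex
      obtain ⟨a, ha⟩ := hψF x
      refine hinj x hx hdx ⟨y' + a, ?_⟩
      rw [map_add, hy', ha]
      abel
    · intro x' hx' hdx'
      obtain ⟨x, hx, hdx, y', hy'⟩ := hsurj x' hx' hdx'
      obtain ⟨a, ha⟩ := hψF x
      refine ⟨x, hx, hdx, y' + a, ?_⟩
      rw [map_add, hy', ha]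
      abel
  · intro x hx hdx hex
    obtain ⟨y', hy'⟩ := hex
    obtain ⟨a, ha⟩ := hψF x
    refine hψinj x hx hdx ⟨y' + a, ?_⟩
    rw [map_add, hy', ha]
    abel
end
end

section
/- Let A be a DG commutative algebra and suppose for each k ≥ 0 we have a minimal DG algebra M(k) generated in degrees ≤ k, embeddings M(0) ⊆ M(1) ⊆ M(2) ⊆ …, and compatible morphisms M(k) → A, such that each M(k) → A induces an isomorphism on cohomology in degrees ≤ k and an injection in degree k+1. Then the union M = ⋃_k M(k) with the induced morphism M → A is a quasi-isomorphism, i.e., M is a minimal model of A. -/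
/-!
STATEMENT 2: Let A be a DG commutative algebra and suppose for each k ≥ 0 we
have a minimal DG algebra M(k) generated in degrees ≤ k, embeddings
M(0) ⊆ M(1) ⊆ …, and compatible morphisms M(k) → A inducing an isomorphism on
cohomology in degrees ≤ k and an injection in degree k + 1.  Then the union
M = ⋃_k M(k) with the induced morphism M → A is a quasi-isomorphism, i.e. M is
a minimal model of A.

The union M is represented as an ambient graded algebra (R, 𝒜), free
graded-commutative on generators V (with V⁰ = V¹ = 0), carrying a differential
d; the increasing chain M(k) is the chain of subalgebras S(V^{≤k}) generated
by the generators of degrees ≤ k, each stable under d and minimal (d maps it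
into the square of its augmentation ideal), and the compatible morphisms
M(k) → A are the restrictions of a single DG algebra morphism F : M → A.
-/

noncomputable section

variable {R : Type} [Ring R] [Algebra ℂ R]

theorem mul_mem_iSup' {ι : Type} (p : ι → Submodule ℂ R)
    (h : ∀ i j : ι, ∀ x ∈ p i, ∀ y ∈ p j, ∃ k, x * y ∈ p k)
    {x y : R} (hx : x ∈ ⨆ i, p i) (hy : y ∈ ⨆ i, p i) : x * y ∈ ⨆ i, p i := by
  refine Submodule.iSup_induction (motive := fun x => ∀ y ∈ ⨆ i, p i, x * y ∈ ⨆ i, p i)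
    p hx (fun i x hxi => ?_) (fun y hy => by show 0 * y ∈ _; simp)
    (fun a b ha hb y hy => by
      show (a + b) * y ∈ _; rw [add_mul]; exact add_mem (ha y hy) (hb y hy)) y hy
  intro y hy
  refine Submodule.iSup_induction (motive := fun y => x * y ∈ ⨆ i, p i) p hy
    (fun j y hyj => ?_) (by show x * 0 ∈ _; simp)
    (fun a b ha hb => by show x * (a + b) ∈ _; rw [mul_add]; exact add_mem ha hb)
  obtain ⟨k, hk⟩ := h i j x hxi y hyj
  exact Submodule.mem_iSup_of_mem k hk

/-- Under freeness, the generators generate: `adjoin (⋃ i, V i) = ⊤`. -/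
theorem adjoin_generators_eq_top (𝒜 V : ℕ → Submodule ℂ R)
    (hfree : IsFreeGradedCommOn 𝒜 V) :
    ∀ x : R, x ∈ Algebra.adjoin ℂ (⋃ i : ℕ, (V i : Set R)) := by
  obtain ⟨⟨hint, h1, hmul⟩, hgc, hVle, huniv⟩ := hfree
  set S : Subalgebra ℂ R := Algebra.adjoin ℂ (⋃ i : ℕ, (V i : Set R)) with hS
  -- every element of S is a sum of homogeneous elements of S
  have key : ∀ x ∈ S, x ∈ ⨆ i : ℕ, (𝒜 i ⊓ Subalgebra.toSubmodule S) := by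
    intro x hx
    refine Algebra.adjoin_induction (fun x hx => ?_) (fun r => ?_)
      (fun a b _ _ ha hb => add_mem ha hb) (fun a b _ _ ha hb => ?_) hx
    · obtain ⟨_, ⟨i, rfl⟩, hxi⟩ := hx
      exact Submodule.mem_iSup_of_mem i ⟨hVle i hxi, Algebra.subset_adjoin
        (Set.mem_iUnion.2 ⟨i, hxi⟩)⟩
    · rw [Algebra.algebraMap_eq_smul_one]
      exact Submodule.mem_iSup_of_mem 0
        (Submodule.smul_mem _ r ⟨h1, one_mem S⟩)
    · refine mul_mem_iSup' _ (fun i j x hx y hy => ⟨i + j, ?_⟩) ha hb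
      exact ⟨hmul i j x hx.1 y hy.1, (Subalgebra.mem_toSubmodule S).mpr
        (mul_mem ((Subalgebra.mem_toSubmodule S).mp hx.2) ((Subalgebra.mem_toSubmodule S).mp hy.2))⟩
  -- the induced grading on S
  set f : S →ₗ[ℂ] R := S.val.toLinearMap with hf
  have hfinj : Function.Injective f := Subtype.val_injective
  set 𝒜S : ℕ → Submodule ℂ S := fun i => (𝒜 i).comap f with h𝒜S
  have hgrS : IsGrading 𝒜S := by
    refine ⟨?_, h1, fun i j x hx y hy => hmul i j _ hx _ hy⟩
    rw [DirectSum.isInternal_submodule_iff_iSupIndep_and_iSup_eq_top]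
    constructor
    · intro i
      rw [Submodule.disjoint_def]
      intro s hsi hsrest
      have h2 : f s ∈ ⨆ j, ⨆ _ : j ≠ i, 𝒜 j := by
        have : (⨆ j, ⨆ _ : j ≠ i, 𝒜S j) ≤
            Submodule.comap f (⨆ j, ⨆ _ : j ≠ i, 𝒜 j) :=
          iSup₂_le fun j hj =>
            Submodule.comap_mono (le_iSup₂ (f := fun j (_ : j ≠ i) => 𝒜 j) j hj)
        exact this hsrest
      have := (hint.submodule_iSupIndep i).le_bot ⟨hsi, h2⟩
      exact hfinj (by simpa using this)
    · rw [eq_top_iff]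
      intro s _
      have hs := key (s : R) s.2
      have : (s : R) ∈ Submodule.map f (⨆ i, 𝒜S i) := by
        refine Submodule.iSup_induction (motive := fun x => x ∈ Submodule.map f (⨆ i, 𝒜S i))
          _ hs (fun i x hx => ?_) (zero_mem _) (fun a b ha hb => add_mem ha hb)
        exact ⟨⟨x, hx.2⟩, Submodule.mem_iSup_of_mem i hx.1, rfl⟩
      obtain ⟨t, ht, hts⟩ := this
      have : s = t := hfinj hts.symm
      exact this ▸ ht
  have hgcS : IsGradedComm 𝒜S := by
    intro i j x hx y hy
    have := hgc i j _ hx _ hy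
    exact Subtype.ext (by simpa [hf] using this)
  -- the universal property map into S
  have hmemS : ∀ (i : ℕ) (v : V i), (v : R) ∈ S :=
    fun i v => Algebra.subset_adjoin (Set.mem_iUnion.2 ⟨i, v.2⟩)
  set φ : ∀ i : ℕ, (V i) →ₗ[ℂ] S := fun i =>
    LinearMap.codRestrict (Subalgebra.toSubmodule S) (V i).subtype (hmemS i) with hφ
  obtain ⟨G, ⟨hGdeg, hGv⟩, _⟩ := huniv S 𝒜S hgrS hgcS φ (fun i v => hVle i v.2)
  -- uniqueness in R forces S.val ∘ G = id
  obtain ⟨I, _, hIuniq⟩ := huniv R 𝒜 ⟨hint, h1, hmul⟩ hgc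
    (fun i => (V i).subtype) (fun i v => hVle i v.2)
  have e1 : S.val.comp G = I := by
    refine hIuniq _ ⟨fun i x hx => hGdeg i x hx, fun i v => ?_⟩
    have := hGv i v
    simp only [AlgHom.comp_apply]
    rw [this]
    rfl
  have e2 : AlgHom.id ℂ R = I := hIuniq _ ⟨fun i x hx => hx, fun i v => rfl⟩
  intro x
  have e3 : S.val.comp G = AlgHom.id ℂ R := e1.trans e2.symm
  have : S.val (G x) = x := DFunLike.congr_fun e3 x
  exact this ▸ (G x).2

theorem grading_one_eq_bot (𝒜 V : ℕ → Submodule ℂ R) (hV1 : V 1 = ⊥)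
    (hfree : IsFreeGradedCommOn 𝒜 V) : 𝒜 1 = ⊥ := by
  obtain ⟨⟨hint, h1, hmul⟩, hgc, hVle, huniv⟩ := hfree
  have htop := adjoin_generators_eq_top 𝒜 V ⟨⟨hint, h1, hmul⟩, hgc, hVle, huniv⟩
  set W : Submodule ℂ R := ⨆ i : {i : ℕ // i ≠ 1}, 𝒜 i with hW
  have key : ∀ x : R, x ∈ W := by
    intro x
    refine Algebra.adjoin_induction (fun x hx => ?_) (fun r => ?_)
      (fun a b _ _ ha hb => add_mem ha hb) (fun a b _ _ ha hb => ?_) (htop x)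
    · obtain ⟨_, ⟨i, rfl⟩, hxi⟩ := hx
      by_cases hi : i = 1
      · subst hi
        have hx0 : x ∈ V 1 := hxi
        rw [hV1, Submodule.mem_bot] at hx0
        rw [hx0]; exact zero_mem W
      · exact Submodule.mem_iSup_of_mem ⟨i, hi⟩ (hVle i hxi)
    · rw [Algebra.algebraMap_eq_smul_one]
      exact Submodule.mem_iSup_of_mem ⟨0, by simp⟩ (Submodule.smul_mem _ r h1)
    · refine mul_mem_iSup' _ (fun i j x hx y hy => ⟨⟨i.1 + j.1, ?_⟩, hmul _ _ x hx y hy⟩) ha hb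
      have := i.2; have := j.2; omega
  rw [eq_bot_iff]
  intro x hx
  have hW' : W ≤ ⨆ j, ⨆ _ : j ≠ 1, 𝒜 j :=
    iSup_le fun j => le_iSup₂ (f := fun j (_ : j ≠ 1) => 𝒜 j) j.1 j.2
  exact (hint.submodule_iSupIndep 1).le_bot ⟨hx, hW' (key x)⟩

/-- The union of an increasing sequence of k-minimal models of `A` is a
minimal model of `A`. -/
theorem union_of_k_minimal_models_is_minimal_model
    {R : Type} [Ring R] [Algebra ℂ R] (𝒜 V : ℕ → Submodule ℂ R)
    (hV0 : V 0 = ⊥) (hV1 : V 1 = ⊥)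
    (hfree : IsFreeGradedCommOn 𝒜 V)
    (d : R →ₗ[ℂ] R) (hd : IsDifferential 𝒜 d)
    {R' : Type} [Ring R'] [Algebra ℂ R'] (𝒜' : ℕ → Submodule ℂ R')
    (d' : R' →ₗ[ℂ] R')
    (hgr' : IsGrading 𝒜') (hgc' : IsGradedComm 𝒜') (hd' : IsDifferential 𝒜' d')
    -- each M(k) = S(V^{≤k}) is d-stable …
    (hstable : ∀ k : ℕ, ∀ x : R,
      x ∈ Algebra.adjoin ℂ (⋃ i ∈ Set.Iic k, (V i : Set R)) →
      d x ∈ Algebra.adjoin ℂ (⋃ i ∈ Set.Iic k, (V i : Set R)))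
    -- … and is a minimal DG algebra: d maps it into the square of its own
    -- augmentation ideal
    (hmin : ∀ k : ℕ, ∀ x : R,
      x ∈ Algebra.adjoin ℂ (⋃ i ∈ Set.Iic k, (V i : Set R)) →
      d x ∈ Submodule.span ℂ
        {z : R | ∃ a ∈ PositivePart 𝒜 ⊓
            Subalgebra.toSubmodule (Algebra.adjoin ℂ (⋃ i ∈ Set.Iic k, (V i : Set R))),
          ∃ b ∈ PositivePart 𝒜 ⊓
            Subalgebra.toSubmodule (Algebra.adjoin ℂ (⋃ i ∈ Set.Iic k, (V i : Set R))),
          z = a * b})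
    -- a morphism of DG algebras F : M → A, restricting to the compatible
    -- morphisms M(k) → A
    (F : R →ₐ[ℂ] R')
    (hFdeg : ∀ i : ℕ, ∀ x ∈ 𝒜 i, F x ∈ 𝒜' i)
    (hFd : ∀ x : R, F (d x) = d' (F x))
    -- each restriction F|_{M(k)} induces an isomorphism on cohomology in
    -- degrees ≤ k (cohomology of M(k) computed inside M(k)) …
    (hiso : ∀ k : ℕ, ∀ i ≤ k,
      (∀ x : R, x ∈ 𝒜 i →
        x ∈ Algebra.adjoin ℂ (⋃ i' ∈ Set.Iic k, (V i' : Set R)) →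
        d x = 0 → (∃ y' : R', d' y' = F x) →
        ∃ y ∈ Algebra.adjoin ℂ (⋃ i' ∈ Set.Iic k, (V i' : Set R)), d y = x) ∧
      (∀ x' ∈ 𝒜' i, d' x' = 0 →
        ∃ x : R, x ∈ 𝒜 i ∧
          x ∈ Algebra.adjoin ℂ (⋃ i' ∈ Set.Iic k, (V i' : Set R)) ∧
          d x = 0 ∧ ∃ y' : R', d' y' = x' - F x))
    -- … and an injection on cohomology in degree k + 1
    (hinj : ∀ k : ℕ, ∀ x : R, x ∈ 𝒜 (k + 1) →
      x ∈ Algebra.adjoin ℂ (⋃ i' ∈ Set.Iic k, (V i' : Set R)) →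
      d x = 0 → (∃ y' : R', d' y' = F x) →
      ∃ y ∈ Algebra.adjoin ℂ (⋃ i' ∈ Set.Iic k, (V i' : Set R)), d y = x) :
    -- then M is minimal and F : M → A is a quasi-isomorphism: M is a minimal
    -- model of A
    IsMinimal 𝒜 d ∧ ∀ i : ℕ, InducesCohomIsoAt 𝒜 d 𝒜' d' F i := by
  obtain ⟨hgr, hgc, hVle, huniv⟩ := id hfree
  obtain ⟨hint, h1, hmulA⟩ := id hgr
  have htop := adjoin_generators_eq_top 𝒜 V hfree
  set A : ℕ → Subalgebra ℂ R :=
    fun k => Algebra.adjoin ℂ (⋃ i ∈ Set.Iic k, (V i : Set R)) with hA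
  have hAmono : Monotone A := fun k l hkl => Algebra.adjoin_mono
    (Set.iUnion₂_mono' fun i hi => ⟨i, le_trans hi hkl, le_rfl⟩)
  have hcover : ∀ x : R, ∃ k, x ∈ A k := by
    intro x
    have hle : Algebra.adjoin ℂ (⋃ i : ℕ, (V i : Set R)) ≤ ⨆ k, A k := by
      refine Algebra.adjoin_le ?_
      rintro v ⟨_, ⟨i, rfl⟩, hv⟩
      exact le_iSup A i (Algebra.subset_adjoin (Set.mem_iUnion₂.2 ⟨i, Set.self_mem_Iic, hv⟩))
    have hx : x ∈ ⨆ k, A k := hle (htop x)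
    have hdir : Directed (· ≤ ·) A := hAmono.directed_le
    have hmem : x ∈ (↑(⨆ k, A k) : Set R) := hx
    rw [Subalgebra.coe_iSup_of_directed hdir] at hmem
    obtain ⟨_, ⟨k, rfl⟩, hk⟩ := hmem
    exact ⟨k, hk⟩
  constructor
  · refine ⟨⟨V, hfree⟩, grading_one_eq_bot 𝒜 V hV1 hfree, fun x => ?_⟩
    obtain ⟨k, hk⟩ := hcover x
    refine Submodule.span_mono ?_ (hmin k x hk)
    rintro z ⟨a, ⟨haP, _⟩, b, ⟨hbP, _⟩, rfl⟩
    exact ⟨a, haP, b, hbP, rfl⟩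
  · intro i
    constructor
    · intro x hx hdx hy'
      obtain ⟨k, hk⟩ := hcover x
      obtain ⟨y, _, hy⟩ := (hiso (max k i) i (le_max_right k i)).1 x hx
        (hAmono (le_max_left k i) hk) hdx hy'
      exact ⟨y, hy⟩
    · intro x' hx' hdx'
      obtain ⟨x, hx1, _, hx3, hx4⟩ := (hiso i i le_rfl).2 x' hx' hdx'
      exact ⟨x, hx1, hx3, hx4⟩
end
end
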